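/- arXiv:2310.03822 — 4 statements merged into one kernel-verified Lean document; each statement's English description precedes it below -/
import Mathlib

section
/- Let R be a supercommutative superring. An ideal 𝔭 of R is prime (R/𝔭 is a domain) if and only if 𝔭 is a proper ideal such that whenever homogeneous elements x, y ∈ R satisfy xy ∈ 𝔭, then x ∈ 𝔭 or y ∈ 𝔭 (i.e., every prime ideal of a supercommutative superring is completely prime). -/
open DirectSum

/-- A `ZMod 2`-grading on a ring is supercommutative if homogeneous elements satisfy the
sign rule `x * y = (-1)^(|x||y|) * (y * x)`. -/
def SuperCommutative {R : Type*} [Ring R] (𝒜 : ZMod 2 → AddSubgroup R) : Prop :=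
  ∀ (i j : ZMod 2) (x y : R), x ∈ 𝒜 i → y ∈ 𝒜 j →
    x * y = ((-1 : ℤ) ^ (i.val * j.val)) • (y * x)

/-- `2` is a non-zerodivisor in `R`. -/
def TwoRegular (R : Type*) [Ring R] : Prop := ∀ x : R, 2 * x = 0 → x = 0

/-- A two-sided ideal is a superideal if it is graded, i.e. it contains the homogeneous
components of each of its elements. -/
def IsSuperIdeal {R : Type*} [Ring R] (𝒜 : ZMod 2 → AddSubgroup R) [GradedRing 𝒜]
    (I : TwoSidedIdeal R) : Prop :=
  ∀ x ∈ I, ∀ i, (DirectSum.decompose 𝒜 x i : R) ∈ I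

/-- An ideal of a superring is prime if the quotient ring is an integral domain. -/
def IsPrimeSuperIdeal {R : Type*} [Ring R] (I : TwoSidedIdeal R) : Prop :=
  IsDomain I.ringCon.Quotient

/-- An ideal of a superring is maximal if the quotient ring is a field. -/
def IsMaximalSuperIdeal {R : Type*} [Ring R] (I : TwoSidedIdeal R) : Prop :=
  IsField I.ringCon.Quotient

/-- A superring is Noetherian if it satisfies the ascending chain condition on superideals. -/
def SuperNoetherian {R : Type*} [Ring R] (𝒜 : ZMod 2 → AddSubgroup R) [GradedRing 𝒜] : Prop :=
  ∀ f : ℕ →o TwoSidedIdeal R, (∀ n, IsSuperIdeal 𝒜 (f n)) → ∃ n, ∀ m, n ≤ m → f m = f n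

/-- An ideal `𝔭` of a supercommutative superring is prime (`R/𝔭` is a domain) iff it is
proper and completely prime on homogeneous elements. -/
theorem prime_iff_homogeneous_completely_prime {R : Type*} [Ring R]
    (𝒜 : ZMod 2 → AddSubgroup R) [GradedRing 𝒜]
    (hsc : SuperCommutative 𝒜) (h2 : TwoRegular R) (𝔭 : TwoSidedIdeal R) :
    IsPrimeSuperIdeal 𝔭 ↔
      ((1 : R) ∉ 𝔭 ∧
        ∀ x y : R, (∃ i, x ∈ 𝒜 i) → (∃ j, y ∈ 𝒜 j) → x * y ∈ 𝔭 → x ∈ 𝔭 ∨ y ∈ 𝔭) := by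
  have memq : ∀ x : R, x ∈ 𝔭 ↔ (x : 𝔭.ringCon.Quotient) = 0 := by
    intro x
    rw [TwoSidedIdeal.mem_iff]
    exact ⟨fun h => (RingCon.eq 𝔭.ringCon).mpr h, fun h => (RingCon.eq 𝔭.ringCon).mp h⟩
  constructor
  · rintro hP
    haveI : IsDomain 𝔭.ringCon.Quotient := hP
    constructor
    · intro h1
      have : (1 : 𝔭.ringCon.Quotient) = 0 := by rw [← (memq 1).mp h1]; rfl
      exact one_ne_zero this
    · intro x y _ _ hxy
      have : (x : 𝔭.ringCon.Quotient) * y = 0 := by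
        rw [← RingCon.coe_mul, ← memq]; exact hxy
      rcases mul_eq_zero.mp this with h | h
      · exact Or.inl ((memq x).mpr h)
      · exact Or.inr ((memq y).mpr h)
  · rintro ⟨h1, hcp⟩
    -- every odd element is in 𝔭
    have hodd : ∀ x : R, x ∈ 𝒜 1 → x ∈ 𝔭 := by
      intro x hx
      have h := hsc 1 1 x x hx hx
      rw [show ((1 : ZMod 2).val) = 1 from rfl] at h
      have hsq : x * x = -(x * x) := by simpa using h
      have h0 : (2 : R) * (x * x) = 0 := by
        rw [two_mul]; nth_rewrite 1 [hsq]; exact neg_add_cancel _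
      have hx2 : x * x = 0 := h2 _ h0
      have hmem : x * x ∈ 𝔭 := hx2 ▸ 𝔭.zero_mem
      rcases hcp x x ⟨1, hx⟩ ⟨1, hx⟩ hmem with h | h <;> exact h
    -- decomposition into even and odd parts
    have hdec : ∀ a : R, a = (decompose 𝒜 a 0 : R) + (decompose 𝒜 a 1 : R) := by
      intro a
      classical
      have hsum : ∑ i : ZMod 2, ((decompose 𝒜 a i : R)) = a := by
        conv_rhs => rw [← DirectSum.sum_support_decompose 𝒜 a]
        exact (Finset.sum_subset (Finset.subset_univ _)
          (fun i _ hi => by simp [DFinsupp.notMem_support_iff.mp hi])).symm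
      conv_lhs => rw [← hsum]
      exact Fin.sum_univ_two _
    -- complete primality
    have hcp' : ∀ a b : R, a * b ∈ 𝔭 → a ∈ 𝔭 ∨ b ∈ 𝔭 := by
      intro a b hab
      obtain ⟨a0, ha0, a1, ha1, ea⟩ : ∃ a0 ∈ 𝒜 0, ∃ a1 ∈ 𝒜 1, a = a0 + a1 :=
        ⟨_, SetLike.coe_mem _, _, SetLike.coe_mem _, hdec a⟩
      obtain ⟨b0, hb0, b1, hb1, eb⟩ : ∃ b0 ∈ 𝒜 0, ∃ b1 ∈ 𝒜 1, b = b0 + b1 :=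
        ⟨_, SetLike.coe_mem _, _, SetLike.coe_mem _, hdec b⟩
      have ha1p : a1 ∈ 𝔭 := hodd _ ha1
      have hb1p : b1 ∈ 𝔭 := hodd _ hb1
      have h00 : a0 * b0 ∈ 𝔭 := by
        have e : a0 * b0 = a * b - a0 * b1 - a1 * b := by rw [ea, eb]; noncomm_ring
        rw [e]
        exact 𝔭.sub_mem (𝔭.sub_mem hab (𝔭.mul_mem_left _ _ hb1p)) (𝔭.mul_mem_right _ _ ha1p)
      rcases hcp a0 b0 ⟨0, ha0⟩ ⟨0, hb0⟩ h00 with h | h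
      · exact Or.inl (ea ▸ 𝔭.add_mem h ha1p)
      · exact Or.inr (eb ▸ 𝔭.add_mem h hb1p)
    -- quotient is a domain
    haveI : Nontrivial 𝔭.ringCon.Quotient := by
      refine ⟨1, 0, fun h => ?_⟩
      exact h1 ((memq 1).mpr (by rw [← h]; rfl))
    haveI : NoZeroDivisors 𝔭.ringCon.Quotient := by
      constructor
      intro x y hxy
      obtain ⟨a, rfl⟩ := Quot.exists_rep x
      obtain ⟨b, rfl⟩ := Quot.exists_rep y
      have hab : a * b ∈ 𝔭 := by
        rw [memq, RingCon.coe_mul]; exact hxy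
      rcases hcp' a b hab with h | h
      · exact Or.inl ((memq a).mp h)
      · exact Or.inr ((memq b).mp h)
    exact NoZeroDivisors.to_isDomain _
end

section
/- Let R be a supercommutative superring. A superring R is Noetherian (satisfies the ascending chain condition on graded ideals) if and only if R₀ is a Noetherian commutative ring and R₁ is a finitely generated R₀-module. -/
open DirectSum

section Helpers
set_option linter.unusedSectionVars false
variable {R : Type*} [Ring R] (𝒜 : ZMod 2 → AddSubgroup R) [GradedRing 𝒜]

private lemma zmod2_cases (i : ZMod 2) : i = 0 ∨ i = 1 := by revert i; decide

private lemma dec_sum (x : R) :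
    (decompose 𝒜 x 0 : R) + (decompose 𝒜 x 1 : R) = x := by
  classical
  have h : ∀ i ∈ (Finset.univ : Finset (ZMod 2)),
      i ∉ DFinsupp.support (decompose 𝒜 x) → ((decompose 𝒜 x i : R)) = 0 := by
    intro i _ hi
    rw [DFinsupp.notMem_support_iff.mp hi]; rfl
  calc (decompose 𝒜 x 0 : R) + (decompose 𝒜 x 1 : R)
      = ∑ i : ZMod 2, (decompose 𝒜 x i : R) :=
        (Fin.sum_univ_two (fun i : ZMod 2 => (decompose 𝒜 x i : R))).symm
    _ = ∑ i ∈ DFinsupp.support (decompose 𝒜 x), (decompose 𝒜 x i : R) :=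
        (Finset.sum_subset (Finset.subset_univ _) h).symm
    _ = x := DirectSum.sum_support_decompose 𝒜 x

private lemma dec_pieces {a b : R} (ha : a ∈ 𝒜 0) (hb : b ∈ 𝒜 1) :
    (decompose 𝒜 (a + b) 0 : R) = a ∧ (decompose 𝒜 (a + b) 1 : R) = b := by
  constructor
  · rw [decompose_add]
    push_cast [DirectSum.add_apply]
    rw [decompose_of_mem_same 𝒜 ha, decompose_of_mem_ne 𝒜 hb (by decide : (1:ZMod 2) ≠ 0),
      add_zero]
  · rw [decompose_add]
    push_cast [DirectSum.add_apply]
    rw [decompose_of_mem_same 𝒜 hb, decompose_of_mem_ne 𝒜 ha (by decide : (0:ZMod 2) ≠ 1),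
      zero_add]

private lemma dec_mul {r0 r1 x0 x1 : R} (hr0 : r0 ∈ 𝒜 0) (hr1 : r1 ∈ 𝒜 1)
    (hx0 : x0 ∈ 𝒜 0) (hx1 : x1 ∈ 𝒜 1) :
    (decompose 𝒜 ((r0 + r1) * (x0 + x1)) 0 : R) = r0 * x0 + r1 * x1 ∧
      (decompose 𝒜 ((r0 + r1) * (x0 + x1)) 1 : R) = r0 * x1 + r1 * x0 := by
  have key : (r0 + r1) * (x0 + x1) = (r0 * x0 + r1 * x1) + (r0 * x1 + r1 * x0) := by
    rw [add_mul, mul_add, mul_add]; abel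
  rw [key]
  exact dec_pieces 𝒜
    (add_mem (SetLike.mul_mem_graded hr0 hx0) (SetLike.mul_mem_graded hr1 hx1))
    (add_mem (SetLike.mul_mem_graded hr0 hx1) (SetLike.mul_mem_graded hr1 hx0))

variable {ι : Type*} (d : ZMod 2) (v : ι → R)

/-- Degree-`i` part of the ideal generated by homogeneous elements `v j` of degree `d`. -/
def Cl (i : ZMod 2) : AddSubgroup R :=
  AddSubgroup.closure {x : R | ∃ c ∈ 𝒜 (i + d), ∃ j, x = c * v j}

lemma Cl_mul (k i : ZMod 2) {r : R} (hr : r ∈ 𝒜 k) {x : R} (hx : x ∈ Cl 𝒜 d v i) :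
    r * x ∈ Cl 𝒜 d v (k + i) := by
  refine AddSubgroup.closure_induction ?_ ?_ ?_ ?_ hx
  · rintro y ⟨c, hc, j, rfl⟩
    refine AddSubgroup.subset_closure ⟨r * c, ?_, j, (mul_assoc _ _ _).symm⟩
    rw [add_assoc]
    exact SetLike.mul_mem_graded hr hc
  · rw [mul_zero]; exact zero_mem _
  · intro a b _ _ ha hb; rw [mul_add]; exact add_mem ha hb
  · intro a _ ha; rw [mul_neg]; exact neg_mem ha

lemma Cl_le_span (i : ZMod 2) {x : R} (hx : x ∈ Cl 𝒜 d v i) :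
    x ∈ Submodule.span R (Set.range v) := by
  refine AddSubgroup.closure_induction ?_ (zero_mem _) (fun a b _ _ ha hb => add_mem ha hb)
    (fun a _ ha => neg_mem ha) hx
  rintro y ⟨c, hc, j, rfl⟩
  exact Submodule.smul_mem _ c (Submodule.subset_span ⟨j, rfl⟩)

lemma span_dec (hv : ∀ j, v j ∈ 𝒜 d) {x : R} (hx : x ∈ Submodule.span R (Set.range v)) :
    ∀ i, (decompose 𝒜 x i : R) ∈ Cl 𝒜 d v i := by
  induction hx using Submodule.span_induction with
  | mem y hy =>
    intro i
    obtain ⟨j, rfl⟩ := hy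
    by_cases hi : i = d
    · subst hi
      rw [decompose_of_mem_same 𝒜 (hv j)]
      refine AddSubgroup.subset_closure ⟨1, ?_, j, (one_mul _).symm⟩
      have hdd : i + i = 0 := by rcases zmod2_cases i with rfl | rfl <;> rfl
      rw [hdd]
      exact SetLike.one_mem_graded 𝒜
    · rw [decompose_of_mem_ne 𝒜 (hv j) (Ne.symm hi)]
      exact zero_mem _
  | zero =>
    intro i
    simp only [decompose_zero, DirectSum.zero_apply, ZeroMemClass.coe_zero]
    exact zero_mem _
  | add a b _ _ ha hb =>
    intro i
    rw [decompose_add]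
    push_cast [DirectSum.add_apply]
    exact add_mem (ha i) (hb i)
  | smul r y hy ih =>
    intro i
    have hry : r • y = r * y := rfl
    rcases zmod2_cases i with rfl | rfl
    · have hkey : (decompose 𝒜 (r • y) 0 : R) =
          (decompose 𝒜 r 0 : R) * (decompose 𝒜 y 0 : R) +
            (decompose 𝒜 r 1 : R) * (decompose 𝒜 y 1 : R) := by
        rw [hry]
        conv_lhs => rw [← dec_sum 𝒜 r, ← dec_sum 𝒜 y]
        exact (dec_mul 𝒜 (SetLike.coe_mem _) (SetLike.coe_mem _)
          (SetLike.coe_mem _) (SetLike.coe_mem _)).1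
      rw [hkey]
      exact add_mem (Cl_mul 𝒜 d v 0 0 (SetLike.coe_mem _) (ih 0))
        (Cl_mul 𝒜 d v 1 1 (SetLike.coe_mem _) (ih 1))
    · have hkey : (decompose 𝒜 (r • y) 1 : R) =
          (decompose 𝒜 r 0 : R) * (decompose 𝒜 y 1 : R) +
            (decompose 𝒜 r 1 : R) * (decompose 𝒜 y 0 : R) := by
        rw [hry]
        conv_lhs => rw [← dec_sum 𝒜 r, ← dec_sum 𝒜 y]
        exact (dec_mul 𝒜 (SetLike.coe_mem _) (SetLike.coe_mem _)
          (SetLike.coe_mem _) (SetLike.coe_mem _)).2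
      rw [hkey]
      exact add_mem (Cl_mul 𝒜 d v 0 1 (SetLike.coe_mem _) (ih 1))
        (Cl_mul 𝒜 d v 1 0 (SetLike.coe_mem _) (ih 0))

lemma span_mul_right (hsc : SuperCommutative 𝒜) (hv : ∀ j, v j ∈ 𝒜 d)
    {x : R} (hx : x ∈ Submodule.span R (Set.range v)) (r : R) :
    x * r ∈ Submodule.span R (Set.range v) := by
  induction hx using Submodule.span_induction with
  | mem y hy =>
    obtain ⟨j, rfl⟩ := hy
    have h0 := hsc d 0 (v j) (decompose 𝒜 r 0 : R) (hv j) (SetLike.coe_mem _)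
    have h1 := hsc d 1 (v j) (decompose 𝒜 r 1 : R) (hv j) (SetLike.coe_mem _)
    have hs : v j * r = v j * (decompose 𝒜 r 0 : R) + v j * (decompose 𝒜 r 1 : R) := by
      rw [← mul_add, dec_sum 𝒜 r]
    rw [hs, h0, h1]
    refine add_mem (zsmul_mem ?_ _) (zsmul_mem ?_ _)
    · exact Submodule.smul_mem _ _ (Submodule.subset_span ⟨j, rfl⟩)
    · exact Submodule.smul_mem _ _ (Submodule.subset_span ⟨j, rfl⟩)
  | zero => rw [zero_mul]; exact zero_mem _
  | add a b _ _ ha hb => rw [add_mul]; exact add_mem ha hb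
  | smul c y hy ih => rw [smul_eq_mul, mul_assoc]; exact Submodule.smul_mem _ _ ih

/-- The two-sided superideal generated by homogeneous elements `v j` of degree `d`. -/
def superIdealOf (hsc : SuperCommutative 𝒜) (hv : ∀ j, v j ∈ 𝒜 d) : TwoSidedIdeal R :=
  TwoSidedIdeal.mk' (Submodule.span R (Set.range v) : Set R)
    (zero_mem _) (fun hx hy => add_mem hx hy) (fun hx => neg_mem hx)
    (fun {x _} hy => Submodule.smul_mem _ x hy)
    (fun {_ y} hx => span_mul_right 𝒜 d v hsc hv hx y)

lemma mem_superIdealOf (hsc : SuperCommutative 𝒜) (hv : ∀ j, v j ∈ 𝒜 d) {x : R} :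
    x ∈ superIdealOf 𝒜 d v hsc hv ↔ x ∈ Submodule.span R (Set.range v) :=
  TwoSidedIdeal.mem_mk' _ _ _ _ _ _ x

lemma superIdealOf_isSuper (hsc : SuperCommutative 𝒜) (hv : ∀ j, v j ∈ 𝒜 d) :
    IsSuperIdeal 𝒜 (superIdealOf 𝒜 d v hsc hv) := by
  intro x hx i
  rw [mem_superIdealOf] at hx ⊢
  exact Cl_le_span 𝒜 d v i (span_dec 𝒜 d v hv hx i)

end Helpers

/-- A superring is Noetherian iff `R₀` is a Noetherian (commutative) ring and `R₁` is a
finitely generated `R₀`-module. -/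
theorem superNoetherian_iff {R : Type*} [Ring R]
    (𝒜 : ZMod 2 → AddSubgroup R) [GradedRing 𝒜]
    (hsc : SuperCommutative 𝒜) (h2 : TwoRegular R) :
    SuperNoetherian 𝒜 ↔
      (IsNoetherianRing (SetLike.GradeZero.subring 𝒜) ∧
        ∃ (n : ℕ) (g : Fin n → R), (∀ j, g j ∈ 𝒜 1) ∧
          ∀ y ∈ 𝒜 1, y ∈ AddSubgroup.closure {x : R | ∃ a ∈ 𝒜 0, ∃ j : Fin n, x = a * g j}) := by
  constructor
  · intro hSN
    constructor
    · -- R₀ is Noetherian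
      rw [isNoetherianRing_iff, ← monotone_stabilizes_iff_noetherian]
      intro J
      let v : ∀ n, ↥(J n) → R := fun n a =>
        ((a : ↥(SetLike.GradeZero.subring 𝒜)) : R)
      have hv : ∀ n (a : ↥(J n)), v n a ∈ 𝒜 0 := fun n a =>
        (a : ↥(SetLike.GradeZero.subring 𝒜)).2
      have hmono : ∀ {a b : ℕ}, a ≤ b →
          superIdealOf 𝒜 0 (v a) hsc (hv a) ≤ superIdealOf 𝒜 0 (v b) hsc (hv b) := by
        intro a b hab x hx
        have hx' : x ∈ Submodule.span R (Set.range (v a)) :=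
          (mem_superIdealOf 𝒜 0 (v a) hsc (hv a)).mp hx
        refine (mem_superIdealOf 𝒜 0 (v b) hsc (hv b)).mpr
          (Submodule.span_mono ?_ hx')
        rintro _ ⟨c, rfl⟩
        exact ⟨⟨c.1, J.monotone hab c.2⟩, rfl⟩
      let f : ℕ →o TwoSidedIdeal R :=
        ⟨fun n => superIdealOf 𝒜 0 (v n) hsc (hv n), fun a b hab => hmono hab⟩
      obtain ⟨N, hN⟩ := hSN f (fun n => superIdealOf_isSuper 𝒜 0 (v n) hsc (hv n))
      refine ⟨N, fun m hm => le_antisymm (J.monotone hm) ?_⟩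
      intro a ha
      have h1 : (a : R) ∈ f m :=
        (mem_superIdealOf 𝒜 0 (v m) hsc (hv m)).mpr
          (Submodule.subset_span ⟨⟨a, ha⟩, rfl⟩)
      rw [hN m hm] at h1
      have h2 := span_dec 𝒜 0 (v N) (hv N)
        ((mem_superIdealOf 𝒜 0 (v N) hsc (hv N)).mp h1) 0
      rw [decompose_of_mem_same 𝒜 a.2] at h2
      -- transfer membership in `Cl` back into `J N`
      have hE : ∀ x ∈ Cl 𝒜 0 (v N) 0,
          x ∈ ((J N).toAddSubgroup.map
            (AddSubgroupClass.subtype (SetLike.GradeZero.subring 𝒜))) := by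
        intro x hx
        refine AddSubgroup.closure_induction ?_ (zero_mem _)
          (fun p q _ _ hp hq => add_mem hp hq) (fun p _ hp => neg_mem hp) hx
        rintro y ⟨c, hc, j, rfl⟩
        exact ⟨(⟨c, hc⟩ : ↥(SetLike.GradeZero.subring 𝒜)) * j.1,
          (J N).smul_mem _ j.2, rfl⟩
      obtain ⟨b, hb, hba⟩ := hE _ h2
      have hba' : b = a := Subtype.coe_injective hba
      rw [← hba']
      exact hb
    · -- R₁ is finitely generated
      by_contra hcon
      push_neg at hcon
      classical
      let V := ↥(𝒜 1)
      let pick : ∀ (n : ℕ), (Fin n → V) → V := fun n w =>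
        ⟨(hcon n (fun j => (w j).1) (fun j => (w j).2)).choose,
         (hcon n (fun j => (w j).1) (fun j => (w j).2)).choose_spec.1⟩
      have pick_not_mem : ∀ (n : ℕ) (w : Fin n → V),
          ((pick n w : V) : R) ∉ AddSubgroup.closure
            {x : R | ∃ a ∈ 𝒜 0, ∃ j : Fin n, x = a * (w j).1} :=
        fun n w => (hcon n (fun j => (w j).1) (fun j => (w j).2)).choose_spec.2
      let seq : ∀ n : ℕ, Fin n → V := fun n =>
        Nat.rec (fun i => i.elim0) (fun k w => Fin.snoc w (pick k w)) n
      let y : ℕ → V := fun k => pick k (seq k)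
      have hclaim : ∀ n (j : Fin n), seq n j = y j.val := by
        intro n
        induction n with
        | zero => exact fun j => j.elim0
        | succ k ih =>
          intro j
          refine Fin.lastCases ?_ ?_ j
          · exact Fin.snoc_last _ _
          · intro i
            rw [show seq (k+1) i.castSucc = seq k i from Fin.snoc_castSucc _ _ _]
            exact ih i
      have hv : ∀ n (j : Fin n), (seq n j).val ∈ 𝒜 1 := fun n j => (seq n j).2
      have hmono : ∀ {a b : ℕ}, a ≤ b →
          superIdealOf 𝒜 1 (fun j => (seq a j).val) hsc (hv a) ≤
            superIdealOf 𝒜 1 (fun j => (seq b j).val) hsc (hv b) := by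
        intro a b hab x hx
        have hx' : x ∈ Submodule.span R (Set.range (fun j => (seq a j).val)) :=
          (mem_superIdealOf 𝒜 1 _ hsc (hv a)).mp hx
        refine (mem_superIdealOf 𝒜 1 _ hsc (hv b)).mpr
          (Submodule.span_mono ?_ hx')
        rintro _ ⟨j, rfl⟩
        refine ⟨⟨j.val, lt_of_lt_of_le j.2 hab⟩, ?_⟩
        exact congrArg Subtype.val
          ((hclaim b ⟨j.val, lt_of_lt_of_le j.2 hab⟩).trans (hclaim a j).symm)
      let f : ℕ →o TwoSidedIdeal R :=
        ⟨fun n => superIdealOf 𝒜 1 (fun j => (seq n j).val) hsc (hv n),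
         fun a b hab => hmono hab⟩
      obtain ⟨N, hN⟩ := hSN f (fun n => superIdealOf_isSuper 𝒜 1 _ hsc (hv n))
      have h1 : (y N).val ∈ f (N + 1) := by
        refine (mem_superIdealOf 𝒜 1 _ hsc (hv (N+1))).mpr
          (Submodule.subset_span ⟨Fin.last N, ?_⟩)
        exact congrArg Subtype.val (hclaim (N+1) (Fin.last N))
      rw [hN (N+1) (Nat.le_succ N)] at h1
      have h2 := span_dec 𝒜 1 (fun j => (seq N j).val) (hv N)
        ((mem_superIdealOf 𝒜 1 _ hsc (hv N)).mp h1) 1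
      rw [decompose_of_mem_same 𝒜 (y N).2] at h2
      exact pick_not_mem N (seq N) h2
  · rintro ⟨hNoeth, n, g, hg1, hgspan⟩
    haveI := hNoeth
    have htop : Submodule.span (↥(SetLike.GradeZero.subring 𝒜)) ({(1:R)} ∪ Set.range g) = ⊤ := by
      rw [Submodule.eq_top_iff']
      intro x
      rw [← dec_sum 𝒜 x]
      refine add_mem ?_ ?_
      · have h : (decompose 𝒜 x 0 : R) =
            (⟨(decompose 𝒜 x 0 : R), (SetLike.coe_mem _)⟩ : ↥(SetLike.GradeZero.subring 𝒜)) • (1:R) := by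
          show _ = (decompose 𝒜 x 0 : R) * 1
          rw [mul_one]
        rw [h]
        exact Submodule.smul_mem _ _ (Submodule.subset_span (Or.inl rfl))
      · have hx1 := hgspan _ (SetLike.coe_mem (decompose 𝒜 x 1))
        refine AddSubgroup.closure_induction ?_ (zero_mem _)
          (fun a b _ _ ha hb => add_mem ha hb) (fun a _ ha => neg_mem ha) hx1
        rintro z ⟨a, ha, j, rfl⟩
        have h : a * g j = (⟨a, ha⟩ : ↥(SetLike.GradeZero.subring 𝒜)) • g j := rfl
        rw [h]
        exact Submodule.smul_mem _ _ (Submodule.subset_span (Or.inr ⟨j, rfl⟩))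
    haveI hfin : Module.Finite (↥(SetLike.GradeZero.subring 𝒜)) R :=
      ⟨Submodule.fg_def.mpr ⟨{(1:R)} ∪ Set.range g,
        (Set.finite_singleton 1).union (Set.finite_range g), htop⟩⟩
    haveI : IsNoetherian (↥(SetLike.GradeZero.subring 𝒜)) R := isNoetherian_of_isNoetherianRing_of_finite (↥(SetLike.GradeZero.subring 𝒜)) R
    intro f _
    let F : ℕ →o Submodule (↥(SetLike.GradeZero.subring 𝒜)) R :=
      ⟨fun k =>
        { carrier := {x : R | x ∈ f k}
          add_mem' := fun ha hb => (f k).add_mem ha hb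
          zero_mem' := (f k).zero_mem
          smul_mem' := fun c x hx => (f k).mul_mem_left (c : R) x hx },
       fun a b hab x hx => f.monotone hab hx⟩
    obtain ⟨N, hstab⟩ := (monotone_stabilizes_iff_noetherian.mpr inferInstance) F
    refine ⟨N, fun m hm => TwoSidedIdeal.ext fun x => ?_⟩
    have hx : x ∈ F N ↔ x ∈ F m := by rw [hstab m hm]
    exact ⟨fun h => hx.mpr h, fun h => hx.mp h⟩
end

section
/- Let R be a Noetherian supercommutative superring and M a nonzero R-supermodule. Then the set D(M) consisting of 0 and the zerodivisors on M equals the union of the associated primes of M: D(M) = ⋃_{𝔭 ∈ 𝔞𝔰𝔰(M)} 𝔭. -/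
open DirectSum

/-- The action of a graded ring on a graded module is compatible with the gradings. -/
def GradedSMul {R : Type*} [Ring R] (𝒜 : ZMod 2 → AddSubgroup R)
    {M : Type*} [AddCommGroup M] [Module R M] (ℳ : ZMod 2 → AddSubgroup M) : Prop :=
  ∀ (i j : ZMod 2) (r : R) (m : M), r ∈ 𝒜 i → m ∈ ℳ j → r • m ∈ ℳ (i + j)

section Aux

set_option linter.unusedSectionVars false

variable {R : Type*} [Ring R] (𝒜 : ZMod 2 → AddSubgroup R) [GradedRing 𝒜]
variable {M : Type*} [AddCommGroup M] [Module R M] (ℳ : ZMod 2 → AddSubgroup M)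
  [DirectSum.Decomposition ℳ]

lemma homog_eq_zero_of_add {u v : M} {p q : ZMod 2} (hpq : p ≠ q)
    (hu : u ∈ ℳ p) (hv : v ∈ ℳ q) (h : u + v = 0) : u = 0 := by
  have hu' : u ∈ ℳ q := by
    rw [eq_neg_of_add_eq_zero_left h]
    exact neg_mem hv
  rw [← DirectSum.decompose_of_mem_same ℳ hu, DirectSum.decompose_of_mem_ne ℳ hu' hpq.symm]

lemma decompose_two_sum (x : M) :
    (decompose ℳ x 0 : M) + (decompose ℳ x 1 : M) = x := by
  classical
  have h := DirectSum.sum_support_decompose ℳ x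
  have huniv : (Finset.univ : Finset (ZMod 2)) = {0, 1} := by decide
  calc (decompose ℳ x 0 : M) + (decompose ℳ x 1 : M)
      = ∑ i : ZMod 2, (decompose ℳ x i : M) := by
        rw [huniv, Finset.sum_insert (by decide), Finset.sum_singleton]
    _ = ∑ i ∈ (decompose ℳ x).support, (decompose ℳ x i : M) := by
        refine (Finset.sum_subset (Finset.subset_univ _) ?_).symm
        intro i _ hi
        rw [DFinsupp.notMem_support_iff.mp hi, ZeroMemClass.coe_zero]
    _ = x := h

lemma decompose_smul_eq_zero (hact : GradedSMul 𝒜 ℳ) {m : M} {k : ZMod 2} (hm : m ∈ ℳ k)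
    {r : R} (hr : r • m = 0) (j : ZMod 2) : (decompose 𝒜 r j : R) • m = 0 := by
  have hsum : (decompose 𝒜 r 0 : R) • m + (decompose 𝒜 r 1 : R) • m = 0 := by
    rw [← add_smul, decompose_two_sum 𝒜 r, hr]
  have hne : (0 : ZMod 2) + k ≠ 1 + k := by
    intro h
    exact (by decide : (0 : ZMod 2) ≠ 1) (add_right_cancel h)
  have h0 : (decompose 𝒜 r 0 : R) • m = 0 :=
    homog_eq_zero_of_add ℳ hne (hact 0 k _ m (SetLike.coe_mem _) hm)
      (hact 1 k _ m (SetLike.coe_mem _) hm) hsum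
  have h1 : (decompose 𝒜 r 1 : R) • m = 0 := by
    rw [h0, zero_add] at hsum
    exact hsum
  have : j = 0 ∨ j = 1 := by revert j; decide
  rcases this with rfl | rfl
  · exact h0
  · exact h1

lemma sign_smul_eq_zero (hsc : SuperCommutative 𝒜) {i j : ZMod 2} {u w : R}
    (hu : u ∈ 𝒜 i) (hw : w ∈ 𝒜 j) {m : M} (hm : u • m = 0) : (u * w) • m = 0 := by
  rw [hsc i j u w hu hw, smul_assoc, mul_smul, hm, smul_zero, smul_zero]

/-- The annihilator of a homogeneous element as a two-sided ideal. -/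
def annTSI (hsc : SuperCommutative 𝒜) (hact : GradedSMul 𝒜 ℳ) {m : M} {k : ZMod 2}
    (hm : m ∈ ℳ k) : TwoSidedIdeal R :=
  TwoSidedIdeal.mk' {r : R | r • m = 0}
    (by simp [Set.mem_setOf_eq])
    (fun {x y} hx hy => by
      simp only [Set.mem_setOf_eq] at *
      rw [add_smul, hx, hy, add_zero])
    (fun {x} hx => by
      simp only [Set.mem_setOf_eq] at *
      rw [neg_smul, hx, neg_zero])
    (fun {x y} hy => by
      simp only [Set.mem_setOf_eq] at *
      rw [mul_smul, hy, smul_zero])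
    (fun {x y} hx => by
      simp only [Set.mem_setOf_eq] at *
      have hd : ∀ j : ZMod 2, (decompose 𝒜 x j : R) • m = 0 :=
        decompose_smul_eq_zero 𝒜 ℳ hact hm hx
      have key : ∀ (i j : ZMod 2), ((decompose 𝒜 x i : R) * (decompose 𝒜 y j : R)) • m = 0 :=
        fun i j => sign_smul_eq_zero 𝒜 hsc (SetLike.coe_mem _) (SetLike.coe_mem _) (hd i)
      have hxy : x * y = ((decompose 𝒜 x 0 : R) + (decompose 𝒜 x 1 : R)) *
          ((decompose 𝒜 y 0 : R) + (decompose 𝒜 y 1 : R)) := by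
        rw [decompose_two_sum 𝒜 x, decompose_two_sum 𝒜 y]
      rw [hxy, mul_add, add_mul, add_mul, add_smul, add_smul, add_smul,
        key 0 0, key 1 0, key 0 1, key 1 1]
      simp)

lemma mem_annTSI (hsc : SuperCommutative 𝒜) (hact : GradedSMul 𝒜 ℳ) {m : M} {k : ZMod 2}
    (hm : m ∈ ℳ k) (r : R) : r ∈ annTSI 𝒜 ℳ hsc hact hm ↔ r • m = 0 :=
  TwoSidedIdeal.mem_mk' _ _ _ _ _ _ r

lemma isSuperIdeal_of_ann (hact : GradedSMul 𝒜 ℳ) {m : M} {k : ZMod 2} (hm : m ∈ ℳ k)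
    {I : TwoSidedIdeal R} (hI : ∀ r : R, r ∈ I ↔ r • m = 0) : IsSuperIdeal 𝒜 I := by
  intro x hx j
  rw [hI]
  exact decompose_smul_eq_zero 𝒜 ℳ hact hm ((hI x).mp hx) j

end Aux

/-- Over a Noetherian superring, the set `D(M)` consisting of `0` and the zerodivisors on a
nonzero supermodule `M` is the union of the associated primes of `M`. -/
theorem zerodivisors_eq_union_associated_primes {R : Type*} [Ring R]
    (𝒜 : ZMod 2 → AddSubgroup R) [GradedRing 𝒜]
    (hsc : SuperCommutative 𝒜) (h2 : TwoRegular R) (hN : SuperNoetherian 𝒜)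
    (M : Type*) [AddCommGroup M] [Module R M] (ℳ : ZMod 2 → AddSubgroup M)
    [DirectSum.Decomposition ℳ] (hact : GradedSMul 𝒜 ℳ)
    (hM : ∃ m : M, m ≠ 0) :
    {a : R | a = 0 ∨ ∃ m : M, m ≠ 0 ∧ (∃ i, m ∈ ℳ i) ∧ a • m = 0} =
      {a : R | ∃ 𝔭 : TwoSidedIdeal R, (IsPrimeSuperIdeal 𝔭 ∧
        ∃ m : M, m ≠ 0 ∧ (∃ i, m ∈ ℳ i) ∧ ∀ r : R, r ∈ 𝔭 ↔ r • m = 0) ∧ a ∈ 𝔭} := by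
  classical
  ext a
  simp only [Set.mem_setOf_eq]
  constructor
  · intro ha
    -- find a nonzero homogeneous element annihilated by `a`
    have hexists : ∃ (m₀ : M) (k₀ : ZMod 2), m₀ ≠ 0 ∧ m₀ ∈ ℳ k₀ ∧ a • m₀ = 0 := by
      rcases ha with rfl | ⟨m, hm, ⟨i, hmi⟩, ham⟩
      · obtain ⟨m, hm⟩ := hM
        by_cases h0 : (decompose ℳ m 0 : M) = 0
        · refine ⟨(decompose ℳ m 1 : M), 1, ?_, SetLike.coe_mem _, zero_smul _ _⟩
          intro h1
          apply hm
          rw [← decompose_two_sum ℳ m, h0, h1, add_zero]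
        · exact ⟨_, 0, h0, SetLike.coe_mem _, zero_smul _ _⟩
      · exact ⟨m, i, hm, hmi, ham⟩
    obtain ⟨m₀, k₀, hm₀, hm₀k, ham₀⟩ := hexists
    -- superideals with the well-founded > relation
    have hwf : WellFounded ((· > ·) : {I : TwoSidedIdeal R // IsSuperIdeal 𝒜 I} →
        {I : TwoSidedIdeal R // IsSuperIdeal 𝒜 I} → Prop) := by
      refine (wellFoundedGT_iff_monotone_chain_condition.mpr ?_).wf
      intro f
      obtain ⟨n, hn⟩ := hN ⟨fun n => (f n).1, fun _ _ h => f.mono h⟩ (fun n => (f n).2)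
      exact ⟨n, fun m hm => Subtype.ext (show ((f n : _)).1 = (f m).1 from (hn m hm).symm)⟩
    set S : Set {I : TwoSidedIdeal R // IsSuperIdeal 𝒜 I} :=
      {I | (∃ (m' : M) (i' : ZMod 2), m' ≠ 0 ∧ m' ∈ ℳ i' ∧ ∀ r : R, r ∈ I.1 ↔ r • m' = 0)
        ∧ a ∈ I.1} with hS
    have hSne : S.Nonempty := by
      refine ⟨⟨annTSI 𝒜 ℳ hsc hact hm₀k,
        isSuperIdeal_of_ann 𝒜 ℳ hact hm₀k (mem_annTSI 𝒜 ℳ hsc hact hm₀k)⟩,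
        ⟨m₀, k₀, hm₀, hm₀k, mem_annTSI 𝒜 ℳ hsc hact hm₀k⟩,
        (mem_annTSI 𝒜 ℳ hsc hact hm₀k a).mpr ham₀⟩
    obtain ⟨P, hPS, hPmax⟩ := hwf.has_min S hSne
    obtain ⟨⟨m, k, hm, hmk, hchar⟩, haP⟩ := hPS
    -- maximality restated
    have hmax : ∀ (J : TwoSidedIdeal R) (hJ : IsSuperIdeal 𝒜 J),
        (∃ (m' : M) (i' : ZMod 2), m' ≠ 0 ∧ m' ∈ ℳ i' ∧ ∀ r : R, r ∈ J ↔ r • m' = 0) →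
        a ∈ J → P.1 ≤ J → J = P.1 := by
      intro J hJ hJchar haJ hPJ
      by_contra hne
      exact hPmax ⟨J, hJ⟩ ⟨hJchar, haJ⟩ (lt_of_le_of_ne hPJ (fun h => hne (congrArg Subtype.val h).symm))
    -- homogeneous primality
    have hhom : ∀ (i : ZMod 2) (x : R), x ∈ 𝒜 i → x ∉ P.1 →
        ∀ y : R, x * y ∈ P.1 → y ∈ P.1 := by
      intro i x hxi hxP y hxy
      have hn : x • m ≠ 0 := fun h => hxP ((hchar x).mpr h)
      have hnk : x • m ∈ ℳ (i + k) := hact i k x m hxi hmk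
      set J := annTSI 𝒜 ℳ hsc hact hnk with hJdef
      have hPJ : P.1 ≤ J := by
        intro r hr
        rw [hJdef, mem_annTSI 𝒜 ℳ hsc hact hnk, ← mul_smul]
        exact (hchar (r * x)).mp (P.1.mul_mem_right r x hr)
      have hJP : J = P.1 :=
        hmax J (isSuperIdeal_of_ann 𝒜 ℳ hact hnk (mem_annTSI 𝒜 ℳ hsc hact hnk))
          ⟨x • m, i + k, hn, hnk, mem_annTSI 𝒜 ℳ hsc hact hnk⟩ (hPJ haP) hPJ
      -- components of x*y annihilate m
      have hxym : (x * y) • m = 0 := (hchar _).mp hxy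
      have hxyj : ∀ j : ZMod 2, (x * (decompose 𝒜 y j : R)) • m = 0 := by
        have hsum : (x * (decompose 𝒜 y 0 : R)) • m + (x * (decompose 𝒜 y 1 : R)) • m = 0 := by
          rw [← add_smul, ← mul_add, decompose_two_sum 𝒜 y, hxym]
        have hne2 : i + 0 + k ≠ i + 1 + k := by
          intro h
          exact (by decide : (0 : ZMod 2) ≠ 1)
            (add_left_cancel (add_right_cancel h))
        have c0 : (x * (decompose 𝒜 y 0 : R)) • m ∈ ℳ (i + 0 + k) :=
          hact _ k _ m (SetLike.mul_mem_graded hxi (SetLike.coe_mem _)) hmk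
        have c1 : (x * (decompose 𝒜 y 1 : R)) • m ∈ ℳ (i + 1 + k) :=
          hact _ k _ m (SetLike.mul_mem_graded hxi (SetLike.coe_mem _)) hmk
        have h0 := homog_eq_zero_of_add ℳ hne2 c0 c1 hsum
        have h1 : (x * (decompose 𝒜 y 1 : R)) • m = 0 := by
          rw [h0, zero_add] at hsum
          exact hsum
        intro j
        have : j = 0 ∨ j = 1 := by revert j; decide
        rcases this with rfl | rfl
        · exact h0
        · exact h1
      have hyj : ∀ j : ZMod 2, ((decompose 𝒜 y j : R) * x) • m = 0 := by
        intro j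
        rw [hsc j i _ x (SetLike.coe_mem _) hxi, smul_assoc, hxyj j, smul_zero]
      have hym : y • (x • m) = 0 := by
        rw [← mul_smul, ← decompose_two_sum 𝒜 y, add_mul, add_smul, hyj 0, hyj 1, add_zero]
      have hyJ : y ∈ annTSI 𝒜 ℳ hsc hact hnk := (mem_annTSI 𝒜 ℳ hsc hact hnk y).mpr hym
      rw [← hJdef, hJP] at hyJ
      exact hyJ
    -- odd elements lie in P
    have hodd : ∀ x : R, x ∈ 𝒜 1 → x ∈ P.1 := by
      intro x hx
      have hsq : x * x = 0 := by
        have hx2 := hsc 1 1 x x hx hx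
        have : (((1 : ZMod 2)).val * ((1 : ZMod 2)).val) = 1 := by decide
        rw [this, pow_one, neg_one_zsmul] at hx2
        apply h2
        rw [two_mul]
        nth_rewrite 1 [hx2]
        exact neg_add_cancel _
      by_cases hxP : x ∈ P.1
      · exact hxP
      · exact hhom 1 x hx hxP x (by rw [hsq]; exact P.1.zero_mem)
    -- complete primality
    have hprime : ∀ x y : R, x * y ∈ P.1 → x ∈ P.1 ∨ y ∈ P.1 := by
      intro x y hxy
      by_cases hy : y ∈ P.1
      · exact Or.inr hy
      left
      have hx1 : (decompose 𝒜 x 1 : R) ∈ P.1 := hodd _ (SetLike.coe_mem _)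
      have hx0 : (decompose 𝒜 x 0 : R) ∈ P.1 := by
        by_contra h0
        apply hy
        apply hhom 0 _ (SetLike.coe_mem _) h0 y
        have hx0y : (decompose 𝒜 x 0 : R) * y = x * y - (decompose 𝒜 x 1 : R) * y := by
          have hx0eq : (decompose 𝒜 x 0 : R) = x - (decompose 𝒜 x 1 : R) :=
            eq_sub_of_add_eq (decompose_two_sum 𝒜 x)
          rw [hx0eq, sub_mul]
        rw [hx0y]
        exact P.1.sub_mem hxy (P.1.mul_mem_right _ _ hx1)
      have : x = (decompose 𝒜 x 0 : R) + (decompose 𝒜 x 1 : R) := (decompose_two_sum 𝒜 x).symm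
      rw [this]
      exact P.1.add_mem hx0 hx1
    -- P is a prime superideal
    have hone : (1 : R) ∉ P.1 := by
      intro h1
      exact hm (by simpa using (hchar 1).mp h1)
    have hPprime : IsPrimeSuperIdeal P.1 := by
      letI : Nontrivial P.1.ringCon.Quotient := by
        refine ⟨(0 : R), (1 : R), fun h => hone ?_⟩
        rw [TwoSidedIdeal.mem_iff]
        exact P.1.ringCon.symm ((RingCon.eq _).mp h)
      letI : NoZeroDivisors P.1.ringCon.Quotient := by
        constructor
        intro u v huv
        obtain ⟨x, rfl⟩ := Quotient.exists_rep u
        obtain ⟨y, rfl⟩ := Quotient.exists_rep v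
        have hxy : x * y ∈ P.1 := by
          rw [TwoSidedIdeal.mem_iff]
          exact (RingCon.eq _).mp huv
        rcases hprime x y hxy with h | h
        · left
          exact (RingCon.eq _).mpr ((TwoSidedIdeal.mem_iff _ _).mp h)
        · right
          exact (RingCon.eq _).mpr ((TwoSidedIdeal.mem_iff _ _).mp h)
      exact NoZeroDivisors.to_isDomain _
    exact ⟨P.1, ⟨hPprime, m, hm, ⟨k, hmk⟩, hchar⟩, haP⟩
  · rintro ⟨𝔭, ⟨_, m, hm, hmi, hchar⟩, ha⟩
    exact Or.inr ⟨m, hm, hmi, (hchar a).mp ha⟩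
end

section
/- Let R be a Noetherian supercommutative superring and M a finitely generated R-supermodule. Then there exists a filtration by R-subsupermodules 0 = M₀ ⊂ M₁ ⊂ ⋯ ⊂ M_d = M such that each quotient Mᵢ/Mᵢ₋₁ is isomorphic to R/𝔭ᵢ or to Π(R/𝔭ᵢ) (the parity swap) for some prime ideal 𝔭ᵢ of R. Moreover 𝔞𝔰𝔰(M) ⊆ {𝔭₁, …, 𝔭_d}; in particular 𝔞𝔰𝔰(M) is finite. -/
open DirectSum

section Aux
variable {R : Type*} [Ring R] (𝒜 : ZMod 2 → AddSubgroup R) [GradedRing 𝒜]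
variable {M : Type*} [AddCommGroup M] [Module R M] (ℳ : ZMod 2 → AddSubgroup M)
variable [DirectSum.Decomposition ℳ]

lemma zmod2_add_self : ∀ ε : ZMod 2, ε + ε = 0 := by decide
lemma zmod2_cases_s9 : ∀ ε : ZMod 2, ε = 0 ∨ ε = 1 := by decide

lemma sum_univ_decompose (x : M) :
    x = (decompose ℳ x 0 : M) + (decompose ℳ x 1 : M) := by
  induction x using DirectSum.Decomposition.inductionOn ℳ with
  | zero => simp
  | homogeneous m =>
    rename_i i
    rcases zmod2_cases_s9 i with rfl | rfl
    · rw [decompose_of_mem_same ℳ m.2, decompose_of_mem_ne ℳ m.2 (by decide)]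
      simp
    · rw [decompose_of_mem_same ℳ m.2, decompose_of_mem_ne ℳ m.2 (by decide)]
      simp
  | add a b ha hb =>
    rw [DirectSum.decompose_add, DirectSum.add_apply, AddSubgroup.coe_add,
      DirectSum.add_apply, AddSubgroup.coe_add]
    conv_lhs => rw [ha, hb]
    abel

lemma decompose_apply_add (a b : M) (j : ZMod 2) :
    (decompose ℳ (a + b) j : M) = (decompose ℳ a j : M) + (decompose ℳ b j : M) := by
  rw [DirectSum.decompose_add, DirectSum.add_apply, AddSubgroup.coe_add]

lemma decomp_smul (hact : GradedSMul 𝒜 ℳ) {x : M} {ε : ZMod 2} (hx : x ∈ ℳ ε) (r : R)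
    (i : ZMod 2) :
    (decompose ℳ (r • x) (i + ε) : M) = (decompose 𝒜 r i : R) • x := by
  induction r using DirectSum.Decomposition.inductionOn 𝒜 with
  | zero => simp
  | homogeneous a =>
    rename_i κ
    by_cases h : i = κ
    · subst h
      rw [decompose_of_mem_same ℳ (hact i ε a x a.2 hx),
        decompose_of_mem_same 𝒜 a.2]
    · rw [decompose_of_mem_ne ℳ (hact κ ε a x a.2 hx)
        (fun hh => h (by exact (add_left_injective ε hh).symm)),
        decompose_of_mem_ne 𝒜 a.2 (Ne.symm h), zero_smul]
  | add a b ha hb =>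
    rw [add_smul, decompose_apply_add, ha, hb, decompose_apply_add 𝒜 a b i, add_smul]

/-- Graded submodule predicate. -/
def GSub (N : Submodule R M) : Prop := ∀ x ∈ N, ∀ j, (decompose ℳ x j : M) ∈ N

lemma gsub_bot : GSub ℳ (⊥ : Submodule R M) := by
  intro x hx j
  rw [Submodule.mem_bot] at hx
  subst hx
  simp

lemma gsub_inf {N P : Submodule R M} (hn : GSub ℳ N) (hp : GSub ℳ P) : GSub ℳ (N ⊓ P) :=
  fun x hx j => ⟨hn x hx.1 j, hp x hx.2 j⟩

lemma gsub_sup {N P : Submodule R M} (hn : GSub ℳ N) (hp : GSub ℳ P) : GSub ℳ (N ⊔ P) := by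
  intro x hx j
  rcases Submodule.mem_sup.1 hx with ⟨a, ha, b, hb, rfl⟩
  rw [decompose_apply_add]
  exact Submodule.mem_sup.2 ⟨_, hn a ha j, _, hp b hb j, rfl⟩

lemma gsub_span_singleton (hact : GradedSMul 𝒜 ℳ) {x : M} {ε : ZMod 2} (hx : x ∈ ℳ ε) :
    GSub ℳ (Submodule.span R {x}) := by
  intro y hy j
  rcases Submodule.mem_span_singleton.1 hy with ⟨r, rfl⟩
  have hj : j = (j + ε) + ε := by rw [add_assoc, zmod2_add_self, add_zero]
  rw [hj, decomp_smul 𝒜 ℳ hact hx r (j + ε)]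
  exact Submodule.mem_span_singleton.2 ⟨_, rfl⟩

/-- The two-sided ideal `{r | r • x ∈ N}` for `x` homogeneous and `N` graded. -/
def Ix (hsc : SuperCommutative 𝒜) (hact : GradedSMul 𝒜 ℳ) (N : Submodule R M)
    (hN : GSub ℳ N) {x : M} {ε : ZMod 2} (hx : x ∈ ℳ ε) : TwoSidedIdeal R :=
  TwoSidedIdeal.mk' {r | r • x ∈ N}
    (by simp)
    (fun {a b} ha hb => by simpa [add_smul] using N.add_mem ha hb)
    (fun {a} ha => by simpa [neg_smul] using N.neg_mem ha)
    (fun {a b} hb => by simpa [mul_smul] using N.smul_mem a hb)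
    (by
      intro a b ha
      show (a * b) • x ∈ N
      have key : ∀ (i j : ZMod 2) (u v : R), u ∈ 𝒜 i → v ∈ 𝒜 j → u • x ∈ N →
          (u * v) • x ∈ N := by
        intro i j u v hu hv hux
        rw [hsc i j u v hu hv, smul_assoc, mul_smul]
        exact zsmul_mem (N.smul_mem v hux) _
      have hcomp : ∀ i : ZMod 2, (decompose 𝒜 a i : R) • x ∈ N := by
        intro i
        have := hN _ ha (i + ε)
        rwa [decomp_smul 𝒜 ℳ hact hx a i] at this
      have expand : (a * b) • x =
          ((decompose 𝒜 a 0 : R) * (decompose 𝒜 b 0 : R)) • x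
          + ((decompose 𝒜 a 0 : R) * (decompose 𝒜 b 1 : R)) • x
          + ((decompose 𝒜 a 1 : R) * (decompose 𝒜 b 0 : R)) • x
          + ((decompose 𝒜 a 1 : R) * (decompose 𝒜 b 1 : R)) • x := by
        conv_lhs => rw [sum_univ_decompose 𝒜 a, sum_univ_decompose 𝒜 b]
        rw [add_mul, mul_add, mul_add, add_smul, add_smul, add_smul]
        abel
      rw [expand]
      exact N.add_mem (N.add_mem (N.add_mem
        (key _ _ _ _ (SetLike.coe_mem _) (SetLike.coe_mem _) (hcomp 0))
        (key _ _ _ _ (SetLike.coe_mem _) (SetLike.coe_mem _) (hcomp 0)))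
        (key _ _ _ _ (SetLike.coe_mem _) (SetLike.coe_mem _) (hcomp 1)))
        (key _ _ _ _ (SetLike.coe_mem _) (SetLike.coe_mem _) (hcomp 1)))

lemma mem_Ix (hsc : SuperCommutative 𝒜) (hact : GradedSMul 𝒜 ℳ) (N : Submodule R M)
    (hN : GSub ℳ N) {x : M} {ε : ZMod 2} (hx : x ∈ ℳ ε) (r : R) :
    r ∈ Ix 𝒜 ℳ hsc hact N hN hx ↔ r • x ∈ N :=
  TwoSidedIdeal.mem_mk' _ _ _ _ _ _ r

lemma Ix_superideal (hsc : SuperCommutative 𝒜) (hact : GradedSMul 𝒜 ℳ) (N : Submodule R M)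
    (hN : GSub ℳ N) {x : M} {ε : ZMod 2} (hx : x ∈ ℳ ε) :
    IsSuperIdeal 𝒜 (Ix 𝒜 ℳ hsc hact N hN hx) := by
  intro r hr i
  rw [mem_Ix] at hr ⊢
  rw [← decomp_smul 𝒜 ℳ hact hx r i]
  exact hN _ hr _

lemma gsub_span_list (hact : GradedSMul 𝒜 ℳ) (L : List M) (hL : ∀ y ∈ L, ∃ ε, y ∈ ℳ ε) :
    GSub ℳ (Submodule.span R {y | y ∈ L}) := by
  induction L with
  | nil => simpa [Submodule.span_empty, Set.eq_empty_iff_forall_notMem] using gsub_bot ℳ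
  | cons x L ih =>
    have hset : {y | y ∈ x :: L} = insert x {y | y ∈ L} := by
      ext y; simp [List.mem_cons]
    rw [hset, Submodule.span_insert]
    obtain ⟨ε, hx⟩ := hL x List.mem_cons_self
    exact gsub_sup ℳ (gsub_span_singleton 𝒜 ℳ hact hx)
      (ih (fun y hy => hL y (List.mem_cons_of_mem _ hy)))

lemma gsub_chain (hsc : SuperCommutative 𝒜) (hact : GradedSMul 𝒜 ℳ)
    (hNoeth : SuperNoetherian 𝒜) (L : List M) (hL : ∀ y ∈ L, ∃ ε, y ∈ ℳ ε)
    (f : ℕ →o Submodule R M) (hgr : ∀ n, GSub ℳ (f n))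
    (hle : ∀ n, f n ≤ Submodule.span R {y | y ∈ L}) :
    ∃ n, ∀ m, n ≤ m → f m = f n := by
  induction L generalizing f with
  | nil =>
    refine ⟨0, fun m _ => ?_⟩
    have h1 : f m = ⊥ := le_bot_iff.1 (by
      simpa [Submodule.span_empty, Set.eq_empty_iff_forall_notMem] using hle m)
    have h2 : f 0 = ⊥ := le_bot_iff.1 (by
      simpa [Submodule.span_empty, Set.eq_empty_iff_forall_notMem] using hle 0)
    rw [h1, h2]
  | cons x L ih =>
    obtain ⟨ε, hx⟩ := hL x List.mem_cons_self
    set N : Submodule R M := Submodule.span R {y | y ∈ L} with hNdef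
    have hNgr : GSub ℳ N := gsub_span_list 𝒜 ℳ hact L
      (fun y hy => hL y (List.mem_cons_of_mem _ hy))
    -- the intersection chain
    obtain ⟨n₁, hn₁⟩ := ih (fun y hy => hL y (List.mem_cons_of_mem _ hy))
      ⟨fun n => f n ⊓ N, fun a b hab => inf_le_inf_right N (f.mono hab)⟩
      (fun n => gsub_inf ℳ (hgr n) hNgr) (fun n => inf_le_right)
    -- the ideal chain
    have hKgr : ∀ n, GSub ℳ (f n ⊔ N) := fun n => gsub_sup ℳ (hgr n) hNgr
    obtain ⟨n₂, hn₂⟩ := hNoeth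
      ⟨fun n => Ix 𝒜 ℳ hsc hact (f n ⊔ N) (hKgr n) hx, by
        intro a b hab r hr
        have hr' : r ∈ Ix 𝒜 ℳ hsc hact (f a ⊔ N) (hKgr a) hx := hr
        rw [mem_Ix] at hr'
        show r ∈ Ix 𝒜 ℳ hsc hact (f b ⊔ N) (hKgr b) hx
        rw [mem_Ix]
        exact (sup_le_sup_right (f.mono hab) N) hr'⟩
      (fun n => Ix_superideal 𝒜 ℳ hsc hact (f n ⊔ N) (hKgr n) hx)
    refine ⟨max n₁ n₂, fun m hm => le_antisymm ?_ (f.mono hm)⟩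
    set n₀ := max n₁ n₂ with hn₀
    intro y hy
    have hy' : y ∈ Submodule.span R {z | z ∈ x :: L} := hle m hy
    have hset : {z | z ∈ x :: L} = insert x {z | z ∈ L} := by
      ext z; simp [List.mem_cons]
    rw [hset, Submodule.span_insert] at hy'
    rcases Submodule.mem_sup.1 hy' with ⟨a, ha, w, hw, hyaw⟩
    rcases Submodule.mem_span_singleton.1 ha with ⟨r, rfl⟩
    have hrm : r ∈ Ix 𝒜 ℳ hsc hact (f m ⊔ N) (hKgr m) hx := by
      rw [mem_Ix]
      have : r • x = y - w := by rw [← hyaw]; abel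
      rw [this]
      exact Submodule.sub_mem _ (Submodule.mem_sup_left hy) (Submodule.mem_sup_right hw)
    have hJm : Ix 𝒜 ℳ hsc hact (f m ⊔ N) (hKgr m) hx
        = Ix 𝒜 ℳ hsc hact (f n₂ ⊔ N) (hKgr n₂) hx := hn₂ m (le_trans (le_max_right n₁ n₂) hm)
    have hJn : Ix 𝒜 ℳ hsc hact (f n₀ ⊔ N) (hKgr n₀) hx
        = Ix 𝒜 ℳ hsc hact (f n₂ ⊔ N) (hKgr n₂) hx := hn₂ n₀ (le_max_right n₁ n₂)
    have hrn : r ∈ Ix 𝒜 ℳ hsc hact (f n₀ ⊔ N) (hKgr n₀) hx := by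
      rw [hJn, ← hJm]; exact hrm
    rw [mem_Ix] at hrn
    rcases Submodule.mem_sup.1 hrn with ⟨p, hp, w', hw', hpw⟩
    have hyp : y - p ∈ f m ⊓ N := by
      constructor
      · exact Submodule.sub_mem _ hy (f.mono hm hp)
      · have : y - p = w' + w := by
          rw [← hyaw, ← hpw]; abel
        rw [this]; exact Submodule.add_mem _ hw' hw
    have e1 : f m ⊓ N = f n₁ ⊓ N := hn₁ m (le_trans (le_max_left n₁ n₂) hm)
    have e2 : f n₀ ⊓ N = f n₁ ⊓ N := hn₁ n₀ (le_max_left n₁ n₂)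
    rw [e1, ← e2] at hyp
    have : y = (y - p) + p := by abel
    rw [this]
    exact Submodule.add_mem _ hyp.1 hp

lemma exists_homog_gens [Module.Finite R M] :
    ∃ L : List M, (∀ y ∈ L, ∃ ε, y ∈ ℳ ε) ∧ Submodule.span R {y | y ∈ L} = ⊤ := by
  obtain ⟨S, hS⟩ := Module.Finite.fg_top (R := R) (M := M)
  set L : List M := S.toList.map (fun y => (decompose ℳ y 0 : M))
      ++ S.toList.map (fun y => (decompose ℳ y 1 : M)) with hLdef
  refine ⟨L, ?_, ?_⟩
  · intro y hy
    rcases List.mem_append.1 hy with h | h <;> rcases List.mem_map.1 h with ⟨z, _, rfl⟩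
    · exact ⟨0, SetLike.coe_mem _⟩
    · exact ⟨1, SetLike.coe_mem _⟩
  · rw [eq_top_iff, ← hS, Submodule.span_le]
    intro y hyS
    have h0 : (decompose ℳ y 0 : M) ∈ Submodule.span R {z | z ∈ L} := Submodule.subset_span
      (List.mem_append.2 (Or.inl (List.mem_map.2 ⟨y, Finset.mem_toList.2 hyS, rfl⟩)))
    have h1 : (decompose ℳ y 1 : M) ∈ Submodule.span R {z | z ∈ L} := Submodule.subset_span
      (List.mem_append.2 (Or.inr (List.mem_map.2 ⟨y, Finset.mem_toList.2 hyS, rfl⟩)))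
    rw [SetLike.mem_coe, sum_univ_decompose ℳ y]
    exact Submodule.add_mem _ h0 h1

lemma exists_max_gsub [Module.Finite R M] (hsc : SuperCommutative 𝒜)
    (hact : GradedSMul 𝒜 ℳ) (hNoeth : SuperNoetherian 𝒜)
    (S : Set (Submodule R M)) (hS : ∀ P ∈ S, GSub ℳ P) (hne : S.Nonempty) :
    ∃ N ∈ S, ∀ P ∈ S, ¬ N < P := by
  obtain ⟨L, hL, hLtop⟩ := exists_homog_gens ℳ (R := R)
  have wf : WellFounded ((· > ·) : {N : Submodule R M // GSub ℳ N} →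
      {N : Submodule R M // GSub ℳ N} → Prop) := by
    refine (wellFoundedGT_iff_monotone_chain_condition.2 ?_).wf
    intro a
    obtain ⟨n, hn⟩ := gsub_chain 𝒜 ℳ hsc hact hNoeth L hL
      ⟨fun n => (a n).1, fun i j hij => a.mono hij⟩
      (fun n => (a n).2) (fun n => by rw [hLtop]; exact le_top)
    exact ⟨n, fun m hm => Subtype.ext (hn m hm).symm⟩
  obtain ⟨N, hNS, hmax⟩ := wf.has_min {N | N.1 ∈ S} (by
    obtain ⟨P, hP⟩ := hne
    exact ⟨⟨P, hS P hP⟩, hP⟩)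
  refine ⟨N.1, hNS, fun P hP hlt => ?_⟩
  exact hmax ⟨P, hS P hP⟩ hP (Subtype.mk_lt_mk.2 hlt)

lemma exists_max_superideal (hNoeth : SuperNoetherian 𝒜)
    (S : Set (TwoSidedIdeal R)) (hS : ∀ I ∈ S, IsSuperIdeal 𝒜 I) (hne : S.Nonempty) :
    ∃ I ∈ S, ∀ J ∈ S, ¬ I < J := by
  have wf : WellFounded ((· > ·) : {I : TwoSidedIdeal R // IsSuperIdeal 𝒜 I} →
      {I : TwoSidedIdeal R // IsSuperIdeal 𝒜 I} → Prop) := by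
    refine (wellFoundedGT_iff_monotone_chain_condition.2 ?_).wf
    intro a
    obtain ⟨n, hn⟩ := hNoeth ⟨fun n => (a n).1, fun i j hij => a.mono hij⟩ (fun n => (a n).2)
    exact ⟨n, fun m hm => Subtype.ext (hn m hm).symm⟩
  obtain ⟨I, hIS, hmax⟩ := wf.has_min {I | I.1 ∈ S} (by
    obtain ⟨P, hP⟩ := hne
    exact ⟨⟨P, hS P hP⟩, hP⟩)
  refine ⟨I.1, hIS, fun J hJ hlt => ?_⟩
  exact hmax ⟨J, hS J hJ⟩ hJ (Subtype.mk_lt_mk.2 hlt)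

lemma tsi_coe_eq_zero (P : TwoSidedIdeal R) (x : R) :
    (x : P.ringCon.Quotient) = 0 ↔ x ∈ P := by
  rw [← RingCon.coe_zero, RingCon.eq]
  exact Iff.rfl

lemma tsi_surj (P : TwoSidedIdeal R) (q : P.ringCon.Quotient) :
    ∃ x : R, (x : P.ringCon.Quotient) = q :=
  Quotient.exists_rep q

lemma mem_of_mul_mem_prime {P : TwoSidedIdeal R} (hP : IsPrimeSuperIdeal P)
    {a b : R} (hab : a * b ∈ P) (hb : b ∉ P) : a ∈ P := by
  haveI : IsDomain P.ringCon.Quotient := hP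
  have : ((a * b : R) : P.ringCon.Quotient) = 0 := (tsi_coe_eq_zero P _).2 hab
  rw [RingCon.coe_mul] at this
  rcases mul_eq_zero.1 this with h | h
  · exact (tsi_coe_eq_zero P _).1 h
  · exact absurd ((tsi_coe_eq_zero P _).1 h) hb

lemma prime_of_homog (hsc : SuperCommutative 𝒜) (h2 : TwoRegular R)
    (P : TwoSidedIdeal R) (hgr : IsSuperIdeal 𝒜 P) (h1 : (1 : R) ∉ P)
    (hHP : ∀ (i j : ZMod 2) (u v : R), u ∈ 𝒜 i → v ∈ 𝒜 j → u * v ∈ P → u ∈ P ∨ v ∈ P) :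
    IsPrimeSuperIdeal P := by
  have hodd : ∀ u : R, u ∈ 𝒜 1 → u ∈ P := by
    intro u hu
    have hsq : u * u = -(u * u) := by
      have h := hsc 1 1 u u hu hu
      rw [show ((1 : ZMod 2)).val = 1 from rfl, mul_one, pow_one, neg_one_zsmul] at h
      exact h
    have h0 : (2 : R) * (u * u) = 0 := by
      rw [two_mul]
      nth_rewrite 2 [hsq]
      exact add_neg_cancel _
    have : u * u = 0 := h2 _ h0
    rcases hHP 1 1 u u hu hu (this ▸ P.zero_mem) with h | h <;> exact h
  have key : ∀ a b : R, a * b ∈ P → a ∈ P ∨ b ∈ P := by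
    intro a b hab
    have ha1 : (decompose 𝒜 a 1 : R) ∈ P := hodd _ (SetLike.coe_mem _)
    have hb1 : (decompose 𝒜 b 1 : R) ∈ P := hodd _ (SetLike.coe_mem _)
    have h00 : (decompose 𝒜 a 0 : R) * (decompose 𝒜 b 0 : R) ∈ P := by
      have hab' : a * b = (decompose 𝒜 a 0 : R) * (decompose 𝒜 b 0 : R)
          + (decompose 𝒜 a 0 : R) * (decompose 𝒜 b 1 : R)
          + (decompose 𝒜 a 1 : R) * (decompose 𝒜 b 0 : R)
          + (decompose 𝒜 a 1 : R) * (decompose 𝒜 b 1 : R) := by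
        conv_lhs => rw [sum_univ_decompose 𝒜 a, sum_univ_decompose 𝒜 b]
        rw [add_mul, mul_add, mul_add]
        abel
      have hexp : (decompose 𝒜 a 0 : R) * (decompose 𝒜 b 0 : R) =
          a * b - (decompose 𝒜 a 0 : R) * (decompose 𝒜 b 1 : R)
            - (decompose 𝒜 a 1 : R) * (decompose 𝒜 b 0 : R)
            - (decompose 𝒜 a 1 : R) * (decompose 𝒜 b 1 : R) := by
        rw [hab']
        abel
      rw [hexp]
      exact P.sub_mem (P.sub_mem (P.sub_mem hab (P.mul_mem_left _ _ hb1))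
        (P.mul_mem_right _ _ ha1)) (P.mul_mem_right _ _ ha1)
    rcases hHP 0 0 _ _ (SetLike.coe_mem _) (SetLike.coe_mem _) h00 with h | h
    · left
      rw [sum_univ_decompose 𝒜 a]
      exact P.add_mem h ha1
    · right
      rw [sum_univ_decompose 𝒜 b]
      exact P.add_mem h hb1
  haveI hnt : Nontrivial P.ringCon.Quotient := by
    refine ⟨(1 : R), (0 : R), fun h => ?_⟩
    exact h1 ((tsi_coe_eq_zero P 1).1 (by rw [h, RingCon.coe_zero]))
  haveI hnz : NoZeroDivisors P.ringCon.Quotient := by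
    constructor
    intro x y hxy
    obtain ⟨a, rfl⟩ := tsi_surj P x
    obtain ⟨b, rfl⟩ := tsi_surj P y
    rw [← RingCon.coe_mul] at hxy
    rcases key a b ((tsi_coe_eq_zero P _).1 hxy) with h | h
    · exact Or.inl ((tsi_coe_eq_zero P _).2 h)
    · exact Or.inr ((tsi_coe_eq_zero P _).2 h)
  exact NoZeroDivisors.to_isDomain _

lemma exists_equiv (hact : GradedSMul 𝒜 ℳ) (N : Submodule R M) (hNg : GSub ℳ N)
    {x : M} {ε : ZMod 2} (hx : x ∈ ℳ ε) (P : TwoSidedIdeal R)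
    (hP : ∀ r : R, r ∈ P ↔ r • x ∈ N) :
    ∃ e : (↥(N ⊔ Submodule.span R {x}) ⧸
        (N.comap (N ⊔ Submodule.span R {x}).subtype)) ≃ₗ[R]
        (R ⧸ (TwoSidedIdeal.asIdeal P : Ideal R)),
      ∀ (j : ZMod 2) (y : M) (hy : y ∈ N ⊔ Submodule.span R {x}), y ∈ ℳ j →
        ∃ r ∈ 𝒜 (j + ε), e (Submodule.Quotient.mk ⟨y, hy⟩) = Submodule.Quotient.mk r := by
  set N' : Submodule R M := N ⊔ Submodule.span R {x} with hN'def
  have hxN' : x ∈ N' := Submodule.mem_sup_right (Submodule.mem_span_singleton_self x)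
  set Q := N.comap N'.subtype with hQdef
  let ψ : R →ₗ[R] ↥N' := {
    toFun := fun r => ⟨r • x, N'.smul_mem r hxN'⟩
    map_add' := fun a b => by ext; simp [add_smul]
    map_smul' := fun a b => by ext; simp [mul_smul] }
  let φ : R →ₗ[R] (↥N' ⧸ Q) := (Q.mkQ).comp ψ
  have hφ : ∀ r : R, φ r = Submodule.Quotient.mk ⟨r • x, N'.smul_mem r hxN'⟩ := fun r => rfl
  have hker : ∀ r : R, φ r = 0 ↔ r ∈ P := by
    intro r
    rw [hφ, Submodule.Quotient.mk_eq_zero, hP]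
    exact Iff.rfl
  have hle : (TwoSidedIdeal.asIdeal P : Ideal R) ≤ LinearMap.ker φ := by
    intro r hr
    rw [LinearMap.mem_ker, hker]
    exact TwoSidedIdeal.mem_asIdeal.1 hr
  let e' : (R ⧸ (TwoSidedIdeal.asIdeal P : Ideal R)) →ₗ[R] (↥N' ⧸ Q) :=
    Submodule.liftQ _ φ hle
  have he'mk : ∀ r : R, e' (Submodule.Quotient.mk r) = φ r := fun r =>
    Submodule.liftQ_apply _ φ r
  have hsurj : Function.Surjective e' := by
    intro q
    obtain ⟨⟨y, hy⟩, rfl⟩ := Submodule.Quotient.mk_surjective _ q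
    rcases Submodule.mem_sup.1 hy with ⟨w, hw, z, hz, hyz⟩
    rcases Submodule.mem_span_singleton.1 hz with ⟨r, rfl⟩
    refine ⟨Submodule.Quotient.mk r, ?_⟩
    rw [he'mk, hφ]
    rw [Submodule.Quotient.eq]
    have : (⟨r • x, N'.smul_mem r hxN'⟩ : ↥N') - ⟨y, hy⟩ = ⟨r • x - y, sub_mem (N'.smul_mem r hxN') hy⟩ := rfl
    rw [this]
    show r • x - y ∈ N
    rw [← hyz]
    simpa using N.neg_mem hw
  have hinj : Function.Injective e' := by
    rw [← LinearMap.ker_eq_bot]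
    apply Submodule.ker_liftQ_eq_bot
    intro r hr
    rw [LinearMap.mem_ker, hker] at hr
    exact TwoSidedIdeal.mem_asIdeal.2 hr
  let E : (R ⧸ (TwoSidedIdeal.asIdeal P : Ideal R)) ≃ₗ[R] (↥N' ⧸ Q) :=
    LinearEquiv.ofBijective e' ⟨hinj, hsurj⟩
  refine ⟨E.symm, ?_⟩
  intro j y hy hyj
  rcases Submodule.mem_sup.1 hy with ⟨w, hw, z, hz, hyz⟩
  rcases Submodule.mem_span_singleton.1 hz with ⟨s, rfl⟩
  refine ⟨(decompose 𝒜 s (j + ε) : R), SetLike.coe_mem _, ?_⟩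
  rw [LinearEquiv.symm_apply_eq]
  have hE : E (Submodule.Quotient.mk ((decompose 𝒜 s (j + ε) : R))) =
      φ ((decompose 𝒜 s (j + ε) : R)) := he'mk _
  rw [hE, hφ, Submodule.Quotient.eq]
  show y - (decompose 𝒜 s (j + ε) : R) • x ∈ N
  have hd : y = (decompose ℳ w j : M) + (decompose 𝒜 s (j + ε) : R) • x := by
    have h1 : y = (decompose ℳ y j : M) := (decompose_of_mem_same ℳ hyj).symm
    have hstep : (decompose ℳ (s • x) j : M) = (decompose 𝒜 s (j + ε) : R) • x := by
      have h := decomp_smul 𝒜 ℳ hact hx s (j + ε)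
      rwa [show (j + ε) + ε = j by rw [add_assoc, zmod2_add_self, add_zero]] at h
    calc y = (decompose ℳ y j : M) := h1
    _ = (decompose ℳ (w + s • x) j : M) := by rw [hyz]
    _ = (decompose ℳ w j : M) + (decompose ℳ (s • x) j : M) := decompose_apply_add ℳ _ _ _
    _ = (decompose ℳ w j : M) + (decompose 𝒜 s (j + ε) : R) • x := by rw [hstep]
  rw [hd]
  simpa using hNg w hw j

/-- The successive-quotient condition, as a predicate in the two submodules and the ideal. -/
def QuotIso (A B : Submodule R M) (P : TwoSidedIdeal R) : Prop :=
  ∃ e : (↥B ⧸ (A.comap B.subtype)) ≃ₗ[R] (R ⧸ (TwoSidedIdeal.asIdeal P : Ideal R)),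
    (∀ (j : ZMod 2) (x : M) (hx : x ∈ B), x ∈ ℳ j →
        ∃ r ∈ 𝒜 j, e (Submodule.Quotient.mk ⟨x, hx⟩) = Submodule.Quotient.mk r) ∨
    (∀ (j : ZMod 2) (x : M) (hx : x ∈ B), x ∈ ℳ j →
        ∃ r ∈ 𝒜 (j + 1), e (Submodule.Quotient.mk ⟨x, hx⟩) = Submodule.Quotient.mk r)

/-- The filtration property up to a given graded submodule `N`. -/
def GoodFilt (N : Submodule R M) : Prop :=
  ∃ (d : ℕ) (Ms : Fin (d + 1) → Submodule R M) (𝔭s : Fin d → TwoSidedIdeal R),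
      Ms 0 = ⊥ ∧ Ms (Fin.last d) = N ∧
      (∀ i : Fin d, Ms i.castSucc < Ms i.succ) ∧
      (∀ (k : Fin (d + 1)), ∀ m ∈ Ms k, ∀ j, (DirectSum.decompose ℳ m j : M) ∈ Ms k) ∧
      (∀ i : Fin d, IsPrimeSuperIdeal (𝔭s i) ∧ IsSuperIdeal 𝒜 (𝔭s i)) ∧
      (∀ i : Fin d, QuotIso 𝒜 ℳ (Ms i.castSucc) (Ms i.succ) (𝔭s i))

lemma goodfilt_bot : GoodFilt 𝒜 ℳ (⊥ : Submodule R M) := by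
  refine ⟨0, fun _ => ⊥, Fin.elim0, rfl, rfl, fun i => i.elim0, ?_, fun i => i.elim0,
    fun i => i.elim0⟩
  intro k m hm j
  rw [Submodule.mem_bot] at hm
  subst hm
  simp

lemma goodfilt_extend (hsc : SuperCommutative 𝒜) (hact : GradedSMul 𝒜 ℳ)
    (N : Submodule R M) (hNgr : GSub ℳ N) (hgood : GoodFilt 𝒜 ℳ N)
    {x : M} {ε : ZMod 2} (hx : x ∈ ℳ ε) (hxN : x ∉ N)
    (P : TwoSidedIdeal R) (hPprime : IsPrimeSuperIdeal P) (hPsuper : IsSuperIdeal 𝒜 P)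
    (hPmem : ∀ r : R, r ∈ P ↔ r • x ∈ N) :
    GoodFilt 𝒜 ℳ (N ⊔ Submodule.span R {x}) := by
  obtain ⟨d, Ms, 𝔭s, h1, h2, h3, h4, h5, h6⟩ := hgood
  set N' : Submodule R M := N ⊔ Submodule.span R {x} with hN'def
  refine ⟨d + 1, Fin.snoc Ms N', Fin.snoc 𝔭s P, ?_, ?_, ?_, ?_, ?_, ?_⟩
  · rw [show (0 : Fin (d + 2)) = (0 : Fin (d + 1)).castSucc from (Fin.castSucc_zero).symm,
      Fin.snoc_castSucc]
    exact h1
  · rw [Fin.snoc_last]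
  · intro i
    induction i using Fin.lastCases with
    | last =>
      rw [Fin.succ_last, Fin.snoc_last, Fin.snoc_castSucc, h2]
      refine lt_of_le_of_ne le_sup_left (fun h => hxN ?_)
      rw [h]
      exact Submodule.mem_sup_right (Submodule.mem_span_singleton_self x)
    | cast j =>
      rw [Fin.succ_castSucc, Fin.snoc_castSucc, Fin.snoc_castSucc]
      exact h3 j
  · intro k
    induction k using Fin.lastCases with
    | last =>
      rw [Fin.snoc_last]
      exact gsub_sup ℳ hNgr (gsub_span_singleton 𝒜 ℳ hact hx)
    | cast j =>
      rw [Fin.snoc_castSucc]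
      exact h4 j
  · intro i
    induction i using Fin.lastCases with
    | last => rw [Fin.snoc_last]; exact ⟨hPprime, hPsuper⟩
    | cast j => rw [Fin.snoc_castSucc]; exact h5 j
  · intro i
    induction i using Fin.lastCases with
    | last =>
      simp only [Fin.succ_last, Fin.snoc_last, Fin.snoc_castSucc, h2]
      obtain ⟨e, he⟩ := exists_equiv 𝒜 ℳ hact N hNgr hx P hPmem
      refine ⟨e, ?_⟩
      rcases zmod2_cases_s9 ε with rfl | rfl
      · left
        intro j y hy hyj
        obtain ⟨r, hr, her⟩ := he j y hy hyj
        exact ⟨r, by simpa using hr, her⟩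
      · right
        intro j y hy hyj
        exact he j y hy hyj
    | cast j =>
      simp only [Fin.succ_castSucc, Fin.snoc_castSucc]
      exact h6 j

lemma good_top [Module.Finite R M] (hsc : SuperCommutative 𝒜) (h2 : TwoRegular R)
    (hNoeth : SuperNoetherian 𝒜) (hact : GradedSMul 𝒜 ℳ) :
    GoodFilt 𝒜 ℳ (⊤ : Submodule R M) := by
  obtain ⟨N, ⟨hNgr, hNgood⟩, hNmax⟩ := exists_max_gsub 𝒜 ℳ hsc hact hNoeth
    {N : Submodule R M | GSub ℳ N ∧ GoodFilt 𝒜 ℳ N}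
    (fun P hP => hP.1) ⟨⊥, gsub_bot ℳ, goodfilt_bot 𝒜 ℳ⟩
  by_cases hNtop : N = ⊤
  · rwa [hNtop] at hNgood
  -- otherwise we extend the filtration, a contradiction
  exfalso
  obtain ⟨y, hy⟩ : ∃ y : M, y ∉ N := by
    by_contra h
    push_neg at h
    exact hNtop (Submodule.eq_top_iff'.2 h)
  have hxex : ∃ (x : M) (ε : ZMod 2), x ∈ ℳ ε ∧ x ∉ N := by
    by_contra h
    push_neg at h
    refine hy ?_
    rw [sum_univ_decompose ℳ y]
    exact N.add_mem (h _ 0 (SetLike.coe_mem _)) (h _ 1 (SetLike.coe_mem _))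
  obtain ⟨x₀, ε₀, hx₀, hx₀N⟩ := hxex
  -- maximal annihilator-type ideal
  obtain ⟨P, hPS, hPmax⟩ := exists_max_superideal 𝒜 hNoeth
    {J : TwoSidedIdeal R | ∃ (x : M) (ε : ZMod 2) (hx : x ∈ ℳ ε),
      x ∉ N ∧ J = Ix 𝒜 ℳ hsc hact N hNgr hx}
    (by rintro J ⟨x, ε, hx, hxN, rfl⟩; exact Ix_superideal 𝒜 ℳ hsc hact N hNgr hx)
    ⟨_, x₀, ε₀, hx₀, hx₀N, rfl⟩
  obtain ⟨x, ε, hx, hxN, hPdef⟩ := hPS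
  have hPmem : ∀ r : R, r ∈ P ↔ r • x ∈ N := by
    intro r
    rw [hPdef, mem_Ix]
  have hPsuper : IsSuperIdeal 𝒜 P := hPdef ▸ Ix_superideal 𝒜 ℳ hsc hact N hNgr hx
  have h1P : (1 : R) ∉ P := by
    rw [hPmem, one_smul]
    exact hxN
  -- homogeneous primality from maximality
  have hHP : ∀ (i j : ZMod 2) (u v : R), u ∈ 𝒜 i → v ∈ 𝒜 j → u * v ∈ P →
      u ∈ P ∨ v ∈ P := by
    intro i j u v hu hv huv
    by_cases hvP : v ∈ P
    · exact Or.inr hvP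
    left
    have hvx : v • x ∉ N := fun h => hvP ((hPmem v).2 h)
    have hvxh : v • x ∈ ℳ (j + ε) := hact j ε v x hv hx
    set P' := Ix 𝒜 ℳ hsc hact N hNgr hvxh with hP'def
    have hle : P ≤ P' := by
      intro r hr
      have hr' : r ∈ P := hr
      show r ∈ P'
      rw [hP'def, mem_Ix]
      have hcomp : ∀ i' : ZMod 2, ((decompose 𝒜 r i' : R) * v) • x ∈ N := by
        intro i'
        have hri : (decompose 𝒜 r i' : R) ∈ P := hPsuper r hr' i'
        rw [hPmem] at hri
        rw [hsc i' j _ v (SetLike.coe_mem _) hv, smul_assoc, mul_smul]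
        exact zsmul_mem (N.smul_mem v hri) _
      have hsplit : (r * v) • x = ((decompose 𝒜 r 0 : R) * v) • x
          + ((decompose 𝒜 r 1 : R) * v) • x := by
        conv_lhs => rw [sum_univ_decompose 𝒜 r]
        rw [add_mul, add_smul]
      rw [← mul_smul, hsplit]
      exact N.add_mem (hcomp 0) (hcomp 1)
    have hP'S : P' ∈ {J : TwoSidedIdeal R | ∃ (x : M) (ε : ZMod 2) (hx : x ∈ ℳ ε),
        x ∉ N ∧ J = Ix 𝒜 ℳ hsc hact N hNgr hx} := ⟨v • x, j + ε, hvxh, hvx, rfl⟩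
    have hPP' : P = P' := by
      by_contra hne
      exact hPmax P' hP'S (lt_of_le_of_ne hle hne)
    rw [hPP', hP'def, mem_Ix, ← mul_smul]
    exact (hPmem (u * v)).1 huv
  have hPprime : IsPrimeSuperIdeal P := prime_of_homog 𝒜 hsc h2 P hPsuper h1P hHP
  -- extend the filtration
  have hext := goodfilt_extend 𝒜 ℳ hsc hact N hNgr hNgood hx hxN P hPprime hPsuper hPmem
  have hN'gr : GSub ℳ (N ⊔ Submodule.span R {x}) :=
    gsub_sup ℳ hNgr (gsub_span_singleton 𝒜 ℳ hact hx)
  refine hNmax (N ⊔ Submodule.span R {x}) ⟨hN'gr, hext⟩ ?_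
  refine lt_of_le_of_ne le_sup_left (fun h => hxN ?_)
  rw [h]
  exact Submodule.mem_sup_right (Submodule.mem_span_singleton_self x)
end Aux

/-- Over a Noetherian superring, every finitely generated supermodule `M` admits a filtration
`0 = M₀ ⊂ M₁ ⊂ ⋯ ⊂ M_d = M` by graded submodules whose successive quotients are isomorphic
to `R/𝔭ᵢ` or `Π(R/𝔭ᵢ)` for prime ideals `𝔭ᵢ`; moreover every associated prime of `M` is one
of the `𝔭ᵢ`, so `𝔞𝔰𝔰(M)` is finite. -/


theorem exists_prime_filtration {R : Type*} [Ring R]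
    (𝒜 : ZMod 2 → AddSubgroup R) [GradedRing 𝒜]
    (hsc : SuperCommutative 𝒜) (h2 : TwoRegular R) (hN : SuperNoetherian 𝒜)
    (M : Type*) [AddCommGroup M] [Module R M] (ℳ : ZMod 2 → AddSubgroup M)
    [DirectSum.Decomposition ℳ] (hact : GradedSMul 𝒜 ℳ) [Module.Finite R M] :
    ∃ (d : ℕ) (Ms : Fin (d + 1) → Submodule R M) (𝔭s : Fin d → TwoSidedIdeal R),
      Ms 0 = ⊥ ∧ Ms (Fin.last d) = ⊤ ∧
      (∀ i : Fin d, Ms i.castSucc < Ms i.succ) ∧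
      (∀ (k : Fin (d + 1)), ∀ m ∈ Ms k, ∀ j, (DirectSum.decompose ℳ m j : M) ∈ Ms k) ∧
      (∀ i : Fin d, IsPrimeSuperIdeal (𝔭s i) ∧ IsSuperIdeal 𝒜 (𝔭s i)) ∧
      (∀ i : Fin d,
        ∃ e : (↥(Ms i.succ) ⧸ ((Ms i.castSucc).comap (Ms i.succ).subtype)) ≃ₗ[R]
            (R ⧸ (TwoSidedIdeal.asIdeal (𝔭s i) : Ideal R)),
          (∀ (j : ZMod 2) (x : M) (hx : x ∈ Ms i.succ), x ∈ ℳ j →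
              ∃ r ∈ 𝒜 j, e (Submodule.Quotient.mk ⟨x, hx⟩) = Submodule.Quotient.mk r) ∨
          (∀ (j : ZMod 2) (x : M) (hx : x ∈ Ms i.succ), x ∈ ℳ j →
              ∃ r ∈ 𝒜 (j + 1), e (Submodule.Quotient.mk ⟨x, hx⟩) = Submodule.Quotient.mk r)) ∧
      (∀ 𝔭 : TwoSidedIdeal R, IsPrimeSuperIdeal 𝔭 →
        (∃ m : M, m ≠ 0 ∧ (∃ i, m ∈ ℳ i) ∧ ∀ r : R, r ∈ 𝔭 ↔ r • m = 0) →
        ∃ i : Fin d, 𝔭 = 𝔭s i) := by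
  obtain ⟨d, Ms, 𝔭s, h1, h2', h3, h4, h5, h6⟩ := good_top 𝒜 ℳ hsc h2 hN hact
  refine ⟨d, Ms, 𝔭s, h1, h2', h3, h4, h5, fun i => h6 i, ?_⟩
  rintro 𝔭 h𝔭prime ⟨m, hm0, -, hann⟩
  set Rm : Submodule R M := Submodule.span R {m} with hRmdef
  have hlast : Rm ⊓ Ms (Fin.last d) ≠ ⊥ := by
    rw [h2', inf_top_eq]
    rw [hRmdef, Ne, Submodule.span_singleton_eq_bot]
    exact hm0
  obtain ⟨k, hkT, hkmin⟩ := (wellFounded_lt (α := Fin (d + 1))).has_min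
    {k : Fin (d + 1) | Rm ⊓ Ms k ≠ ⊥} ⟨Fin.last d, hlast⟩
  have hk0 : k ≠ 0 := by
    intro h
    apply hkT
    rw [h, h1, inf_bot_eq]
  obtain ⟨j, rfl⟩ := Fin.exists_succ_eq.2 hk0
  have hprev : Rm ⊓ Ms j.castSucc = ⊥ := by
    by_contra h
    exact hkmin _ h Fin.castSucc_lt_succ
  obtain ⟨z, hzk, hz0⟩ := (Submodule.ne_bot_iff _).1 hkT
  have hzRm : z ∈ Rm := hzk.1
  have hzsucc : z ∈ Ms j.succ := hzk.2
  obtain ⟨s, hs⟩ := Submodule.mem_span_singleton.1 hzRm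
  have hznotprev : z ∉ Ms j.castSucc := by
    intro h
    apply hz0
    have : z ∈ Rm ⊓ Ms j.castSucc := ⟨hzRm, h⟩
    rw [hprev] at this
    exact (Submodule.mem_bot R).1 this
  have hsnot : s ∉ 𝔭 := fun h => hz0 (hs ▸ (hann s).1 h)
  obtain ⟨e, -⟩ := h6 j
  set q := e (Submodule.Quotient.mk ⟨z, hzsucc⟩) with hq
  have hq0 : q ≠ 0 := by
    rw [hq, Ne, LinearEquiv.map_eq_zero_iff, Submodule.Quotient.mk_eq_zero]
    intro h
    exact hznotprev ((Submodule.mem_comap).1 h)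
  obtain ⟨r, hr⟩ := Submodule.Quotient.mk_surjective _ q
  have hrnot : r ∉ 𝔭s j := by
    intro h
    apply hq0
    rw [← hr]
    exact (Submodule.Quotient.mk_eq_zero _).2 (TwoSidedIdeal.mem_asIdeal.2 h)
  have hsm : ∀ r' : R, e (Submodule.Quotient.mk
      ⟨r' • z, Submodule.smul_mem _ r' hzsucc⟩) = Submodule.Quotient.mk (r' * r) := by
    intro r'
    have h1' : (⟨r' • z, Submodule.smul_mem _ r' hzsucc⟩ : ↥(Ms j.succ))
        = r' • (⟨z, hzsucc⟩ : ↥(Ms j.succ)) := rfl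
    rw [h1', Submodule.Quotient.mk_smul, map_smul, ← hq, ← hr,
      ← Submodule.Quotient.mk_smul, smul_eq_mul]
  refine ⟨j, TwoSidedIdeal.ext fun r' => ?_⟩
  constructor
  · intro hr'
    have hrz : r' • z = 0 := by
      rw [← hs, ← mul_smul]
      exact (hann _).1 (𝔭.mul_mem_right _ _ hr')
    have : Submodule.Quotient.mk (p := TwoSidedIdeal.asIdeal (𝔭s j)) (r' * r) = 0 := by
      rw [← hsm r']
      have hz' : (⟨r' • z, Submodule.smul_mem _ r' hzsucc⟩ : ↥(Ms j.succ)) = 0 := by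
        ext
        exact hrz
      rw [hz', Submodule.Quotient.mk_zero]
      exact map_zero e
    have hmul : r' * r ∈ 𝔭s j :=
      TwoSidedIdeal.mem_asIdeal.1 ((Submodule.Quotient.mk_eq_zero _).1 this)
    exact mem_of_mul_mem_prime (h5 j).1 hmul hrnot
  · intro hr'
    have hmul : r' * r ∈ 𝔭s j := (𝔭s j).mul_mem_right _ _ hr'
    have hzero : e (Submodule.Quotient.mk ⟨r' • z, Submodule.smul_mem _ r' hzsucc⟩) = 0 := by
      rw [hsm r']
      exact (Submodule.Quotient.mk_eq_zero _).2 (TwoSidedIdeal.mem_asIdeal.2 hmul)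
    rw [LinearEquiv.map_eq_zero_iff, Submodule.Quotient.mk_eq_zero] at hzero
    have hrzprev : r' • z ∈ Ms j.castSucc := (Submodule.mem_comap).1 hzero
    have hrzRm : r' • z ∈ Rm := Submodule.smul_mem _ r' hzRm
    have hrz0 : r' • z = 0 := by
      have : r' • z ∈ Rm ⊓ Ms j.castSucc := ⟨hrzRm, hrzprev⟩
      rw [hprev] at this
      exact (Submodule.mem_bot R).1 this
    have : (r' * s) • m = 0 := by
      rw [mul_smul, hs]
      exact hrz0
    exact mem_of_mul_mem_prime h𝔭prime ((hann _).2 this) hsnot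
end
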